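/- Let p be a prime and let B ⊆ ℝ/ℤ be a ball (an open arc of positive length). Let ψ : ℝ_{>0} → ℝ_{>0} be monotonically decreasing and set Ψ(N) = Σ_{n=1}^N n·ψ(n). For α ∈ ℤ_p and N ∈ ℕ, let Δ_N(α) be the number of pairs (a,n) ∈ ℕ² with 1 ≤ n ≤ N, p ∤ n, 1 ≤ a ≤ n, gcd(a,n) = 1, a/n + ℤ ∈ B, and |n·α − a|_p < ψ(n). Then ∫_{ℤ_p} Δ_N(α)² dμ_p(α) ≤ Ψ(N) + 4·Ψ(N)². -/

import Mathlib

open MeasureTheory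
open scoped ENNReal

noncomputable instance (p : ℕ) [Fact p.Prime] : MeasurableSpace ℤ_[p] := borel _
instance (p : ℕ) [Fact p.Prime] : BorelSpace ℤ_[p] := ⟨rfl⟩

/-- The Haar probability measure on the compact additive group `ℤ_[p]`. -/
noncomputable def muP (p : ℕ) [Fact p.Prime] : Measure ℤ_[p] :=
  Measure.addHaarMeasure ⊤

/-- `Δ_N(α)`: the number of pairs `(a,n)` with `1 ≤ n ≤ N`, `p ∤ n`, `1 ≤ a ≤ n`,
`gcd(a,n) = 1`, `a/n + ℤ ∈ B`, and `|n·α - a|_p < ψ(n)`. -/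
noncomputable def Delta (p : ℕ) [Fact p.Prime] (ψ : ℝ → ℝ) (B : Set UnitAddCircle)
    (N : ℕ) (α : ℤ_[p]) : ℕ :=
  Set.ncard {q : ℕ × ℕ | 1 ≤ q.2 ∧ q.2 ≤ N ∧ ¬ p ∣ q.2 ∧ 1 ≤ q.1 ∧ q.1 ≤ q.2 ∧
    Nat.Coprime q.1 q.2 ∧ (((q.1 : ℝ) / (q.2 : ℝ)) : UnitAddCircle) ∈ B ∧
    ‖(q.2 : ℤ_[p]) * α - (q.1 : ℤ_[p])‖ < ψ (q.2 : ℝ)}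

variable {p : ℕ} [hp : Fact p.Prime]

instance : IsProbabilityMeasure (muP p) :=
  ⟨by rw [muP, ← TopologicalSpace.PositiveCompacts.coe_top (α := ℤ_[p])]
      exact Measure.addHaarMeasure_self⟩

instance : (muP p).IsAddLeftInvariant := Measure.isAddLeftInvariant_addHaarMeasure _

lemma meas_norm_le (j : ℕ) :
    muP p {α : ℤ_[p] | ‖α‖ ≤ (p : ℝ) ^ (-(j : ℤ))} ≤ ENNReal.ofReal ((p : ℝ) ^ (-(j : ℤ))) := by
  set ρ : ℝ := (p : ℝ) ^ (-(j : ℤ)) with hρ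
  set G : Set ℤ_[p] := {α | ‖α‖ ≤ ρ} with hG
  have hGmeas : MeasurableSet G :=
    (IsClosed.measurableSet (isClosed_le continuous_norm continuous_const))
  set A : ℕ → Set ℤ_[p] := fun k => {α | ‖α - (k : ℤ_[p])‖ ≤ ρ} with hA
  have hAmeas : ∀ k, MeasurableSet (A k) := by
    intro k
    exact IsClosed.measurableSet (isClosed_le (by continuity) continuous_const)
  have hμtrans : ∀ k : ℕ, muP p (A k) = muP p G := by
    intro k
    have h1 : A k = (fun x => (-(k : ℤ_[p])) + x) ⁻¹' G := by
      ext α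
      simp only [hA, hG, Set.mem_setOf_eq, Set.mem_preimage, neg_add_eq_sub]
    rw [h1, measure_preimage_add]
  have hdisj : Set.PairwiseDisjoint (↑(Finset.range (p ^ j)) : Set ℕ) A := by
    intro k hk k' hk' hne
    simp only [Finset.coe_range, Set.mem_Iio] at hk hk'
    refine Set.disjoint_left.mpr fun α hαk hαk' => ?_
    simp only [hA, Set.mem_setOf_eq] at hαk hαk'
    have h1 : ‖((((k : ℤ) - (k' : ℤ)) : ℤ) : ℤ_[p])‖ ≤ ρ := by
      have heq : ((((k : ℤ) - (k' : ℤ)) : ℤ) : ℤ_[p]) =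
          (α - (k' : ℤ_[p])) + (-(α - (k : ℤ_[p]))) := by push_cast; ring
      rw [heq]
      refine le_trans (PadicInt.nonarchimedean _ _) (max_le hαk' ?_)
      rw [norm_neg]; exact hαk
    have h2 : ((p : ℤ) ^ j) ∣ ((k : ℤ) - (k' : ℤ)) := by
      rw [← PadicInt.norm_int_le_pow_iff_dvd]
      exact h1
    have hkz : (k : ℤ) < (p : ℤ) ^ j := by exact_mod_cast hk
    have hkz' : (k' : ℤ) < (p : ℤ) ^ j := by exact_mod_cast hk'
    have h3 : ((k : ℤ) - k') = 0 := by
      refine Int.eq_zero_of_abs_lt_dvd h2 ?_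
      rw [abs_sub_lt_iff]
      omega
    exact hne (by omega)
  have hsum : ∑ k ∈ Finset.range (p ^ j), muP p (A k) =
      muP p (⋃ k ∈ Finset.range (p ^ j), A k) :=
    (measure_biUnion_finset hdisj fun k _ => hAmeas k).symm
  have hle1 : muP p (⋃ k ∈ Finset.range (p ^ j), A k) ≤ 1 := by
    rw [← measure_univ (μ := muP p)]
    exact measure_mono (Set.subset_univ _)
  have hcard : ((p : ℝ≥0∞) ^ j) * muP p G ≤ 1 := by
    calc ((p : ℝ≥0∞) ^ j) * muP p G = ∑ _k ∈ Finset.range (p ^ j), muP p G := by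
          simp [Finset.sum_const, mul_comm]
      _ = ∑ k ∈ Finset.range (p ^ j), muP p (A k) :=
          Finset.sum_congr rfl fun k _ => (hμtrans k).symm
      _ ≤ 1 := hsum ▸ hle1
  have hp0 : ((p : ℝ≥0∞) ^ j) ≠ 0 := by
    simp [pow_ne_zero, Nat.cast_ne_zero, hp.out.pos.ne']
  have hfin : muP p G ≤ ((p : ℝ≥0∞) ^ j)⁻¹ :=
    ENNReal.le_inv_iff_mul_le.mpr (by rwa [mul_comm])
  calc muP p G ≤ ((p : ℝ≥0∞) ^ j)⁻¹ := hfin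
    _ = ENNReal.ofReal ρ := by
        have hppos : (0:ℝ) < (p:ℝ) := by exact_mod_cast hp.out.pos
        rw [hρ, zpow_neg, zpow_natCast, ENNReal.ofReal_inv_of_pos (pow_pos hppos j)]
        congr 1
        rw [ENNReal.ofReal_pow hppos.le]
        simp

section JJ
variable {p : ℕ} [hp : Fact p.Prime]

open scoped Classical in
/-- least `j` with `p^(-j) < r` -/
noncomputable def jjE (p : ℕ) [Fact p.Prime] (r : ℝ) : ℕ :=
  if h : ∃ j : ℕ, (p : ℝ) ^ (-(j : ℤ)) < r then Nat.find h else 0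

lemma jjE_lt {r : ℝ} (hr : 0 < r) : (p : ℝ) ^ (-(jjE p r : ℤ)) < r := by
  classical
  have h : ∃ j : ℕ, (p : ℝ) ^ (-(j : ℤ)) < r := PadicInt.exists_pow_neg_lt p hr
  rw [jjE, dif_pos h]
  exact Nat.find_spec h

lemma jjE_min {r : ℝ} {v : ℕ} (hv : v < jjE p r) : r ≤ (p : ℝ) ^ (-(v : ℤ)) := by
  classical
  by_cases h : ∃ j : ℕ, (p : ℝ) ^ (-(j : ℤ)) < r
  · rw [jjE, dif_pos h] at hv
    exact le_of_not_gt (Nat.find_min h hv)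
  · rw [jjE, dif_neg h] at hv; omega

lemma norm_le_jjE {x : ℤ_[p]} {r : ℝ} (hx : ‖x‖ < r) :
    ‖x‖ ≤ (p : ℝ) ^ (-(jjE p r : ℤ)) := by
  have hp1 : (1 : ℝ) < p := by exact_mod_cast hp.out.one_lt
  by_cases h0 : x = 0
  · simp only [h0, norm_zero]
    positivity
  · rw [PadicInt.norm_eq_zpow_neg_valuation h0] at hx ⊢
    by_contra hlt
    push_neg at hlt
    have hvlt : x.valuation < (jjE p r : ℤ) := by
      have := (zpow_lt_zpow_iff_right₀ hp1).mp hlt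
      omega
    have : r ≤ (p : ℝ) ^ (-(x.valuation : ℤ)) := jjE_min (by omega)
    linarith
end JJ


variable {p : ℕ} [hp : Fact p.Prime]

lemma meas_ball_le (c : ℤ_[p]) {r : ℝ} :
    muP p {α : ℤ_[p] | ‖α - c‖ < r} ≤ ENNReal.ofReal ((p : ℝ) ^ (-(jjE p r : ℤ))) := by
  have hsub : {α : ℤ_[p] | ‖α - c‖ < r} ⊆ {α : ℤ_[p] | ‖α - c‖ ≤ (p : ℝ) ^ (-(jjE p r : ℤ))} :=
    fun α hα => norm_le_jjE hα
  have htrans : muP p {α : ℤ_[p] | ‖α - c‖ ≤ (p : ℝ) ^ (-(jjE p r : ℤ))} =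
      muP p {α : ℤ_[p] | ‖α‖ ≤ (p : ℝ) ^ (-(jjE p r : ℤ))} := by
    have h1 : {α : ℤ_[p] | ‖α - c‖ ≤ (p : ℝ) ^ (-(jjE p r : ℤ))} =
        (fun x => -c + x) ⁻¹' {α : ℤ_[p] | ‖α‖ ≤ (p : ℝ) ^ (-(jjE p r : ℤ))} := by
      ext α
      simp only [Set.mem_setOf_eq, Set.mem_preimage, neg_add_eq_sub]
    rw [h1, measure_preimage_add]
  exact le_trans (le_trans (measure_mono hsub) htrans.le) (meas_norm_le _)

lemma norm_nat_eq_one {n : ℕ} (hpn : ¬ p ∣ n) : ‖(n : ℤ_[p])‖ = 1 := by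
  refine le_antisymm (PadicInt.norm_le_one _) ?_
  by_contra hlt
  push_neg at hlt
  have : ((n : ℤ) : ℤ_[p]) = (n : ℤ_[p]) := by push_cast; rfl
  rw [← this] at hlt
  rw [PadicInt.norm_int_lt_one_iff_dvd] at hlt
  exact hpn (by exact_mod_cast hlt)

lemma meas_E_le (a n : ℕ) (hpn : ¬ p ∣ n) {r : ℝ} :
    muP p {α : ℤ_[p] | ‖(n : ℤ_[p]) * α - (a : ℤ_[p])‖ < r} ≤
      ENNReal.ofReal ((p : ℝ) ^ (-(jjE p r : ℤ))) := by
  have hnorm : ‖(n : ℤ_[p])‖ = 1 := norm_nat_eq_one hpn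
  obtain ⟨u, hu⟩ := PadicInt.isUnit_iff.mpr hnorm
  have hset : {α : ℤ_[p] | ‖(n : ℤ_[p]) * α - (a : ℤ_[p])‖ < r} =
      {α : ℤ_[p] | ‖α - (↑u⁻¹ * a : ℤ_[p])‖ < r} := by
    ext α
    have heq : (n : ℤ_[p]) * α - a = (n : ℤ_[p]) * (α - ↑u⁻¹ * a) := by
      rw [mul_sub, ← hu, ← mul_assoc]
      rw [Units.mul_inv, one_mul]
    simp only [Set.mem_setOf_eq, heq, norm_mul, hnorm, one_mul]
  rw [hset]
  exact meas_ball_le _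

lemma dvd_of_inter {a n b m : ℕ} {α : ℤ_[p]} {rn rm : ℝ}
    (h1 : ‖(n : ℤ_[p]) * α - (a : ℤ_[p])‖ < rn) (h2 : ‖(m : ℤ_[p]) * α - (b : ℤ_[p])‖ < rm)
    (hrm : rm ≤ rn) :
    ((p : ℤ) ^ (jjE p rn)) ∣ ((a : ℤ) * m - (b : ℤ) * n) := by
  have key : ‖(((b : ℤ) * n - (a : ℤ) * m : ℤ) : ℤ_[p])‖ < rn := by
    have heq : (((b : ℤ) * n - (a : ℤ) * m : ℤ) : ℤ_[p]) =
        (m : ℤ_[p]) * ((n : ℤ_[p]) * α - a) + (-((n : ℤ_[p]) * ((m : ℤ_[p]) * α - b))) := by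
      push_cast; ring
    rw [heq]
    refine lt_of_le_of_lt (PadicInt.nonarchimedean _ _) (max_lt ?_ ?_)
    · calc ‖(m : ℤ_[p]) * ((n : ℤ_[p]) * α - a)‖ = ‖(m : ℤ_[p])‖ * ‖(n : ℤ_[p]) * α - a‖ :=
        norm_mul _ _
      _ ≤ ‖(n : ℤ_[p]) * α - a‖ :=
        mul_le_of_le_one_left (norm_nonneg _) (PadicInt.norm_le_one _)
      _ < rn := h1
    · rw [norm_neg]
      calc ‖(n : ℤ_[p]) * ((m : ℤ_[p]) * α - b)‖ = ‖(n : ℤ_[p])‖ * ‖(m : ℤ_[p]) * α - b‖ :=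
        norm_mul _ _
      _ ≤ ‖(m : ℤ_[p]) * α - b‖ :=
        mul_le_of_le_one_left (norm_nonneg _) (PadicInt.norm_le_one _)
      _ < rn := lt_of_lt_of_le h2 hrm
  have hle := norm_le_jjE (p := p) key
  rw [PadicInt.norm_int_le_pow_iff_dvd] at hle
  have h3 : ((p : ℤ) ^ (jjE p rn)) ∣ ((b : ℤ) * n - (a : ℤ) * m) := by exact_mod_cast hle
  have h4 := dvd_neg.mpr h3
  rwa [neg_sub] at h4


lemma nat_eq_of_cong_div {e a a' : ℕ} (he : 0 < e) (h : (e : ℤ) ∣ (a : ℤ) - a')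
    (h2 : (a - 1) / e = (a' - 1) / e) (ha : 1 ≤ a) (ha' : 1 ≤ a') : a = a' := by
  have key : ∀ x y : ℕ, x ≤ y → 1 ≤ x → (e : ℤ) ∣ (y : ℤ) - x → (x - 1) / e = (y - 1) / e → x = y := by
    intro x y hle hx hdvd hdiv
    have hdvdn : e ∣ y - x := by
      have hc : ((y - x : ℕ) : ℤ) = (y : ℤ) - x := by omega
      exact Int.ofNat_dvd.mp (by rw [hc]; exact hdvd)
    obtain ⟨s, hs⟩ := hdvdn
    have hy : y - 1 = (x - 1) + e * s := by omega
    rw [hy, Nat.add_mul_div_left _ _ he] at hdiv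
    have hs0 : s = 0 := by omega
    subst hs0
    simp at hs
    omega
  rcases le_total a a' with hle | hle
  · exact key a a' hle ha (by rwa [← neg_sub, dvd_neg] at h) h2
  · exact (key a' a hle ha' h h2.symm).symm

open Finset in
lemma count_key {p : ℕ} (hpp : p.Prime) (j n m : ℕ) (hn : 1 ≤ n) (hnm : n ≤ m) (hpn : ¬ p ∣ n) :
    ((Finset.Icc 1 n ×ˢ Finset.Icc 1 m).filter
      (fun ab => ((p : ℤ) ^ j ∣ ((ab.1 : ℤ) * m - (ab.2 : ℤ) * n)) ∧
        ((ab.1 : ℤ) * m ≠ (ab.2 : ℤ) * n))).card * p ^ j ≤ 2 * (n * m) := by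
  classical
  set d := n.gcd m with hd
  have hdpos : 0 < d := Nat.gcd_pos_of_pos_left m hn
  have hdn : d ∣ n := Nat.gcd_dvd_left n m
  have hdm : d ∣ m := Nat.gcd_dvd_right n m
  set e := n / d with he
  have hepos : 0 < e := Nat.div_pos (Nat.le_of_dvd hn hdn) hdpos
  have hed : e * d = n := Nat.div_mul_cancel hdn
  set m' := m / d with hm'
  have hm'd : m' * d = m := Nat.div_mul_cancel hdm
  set q := p ^ j * d with hq
  have hqpos : 0 < q := Nat.mul_pos (pow_pos hpp.pos j) hdpos
  set M := (n * m - 1) / q with hM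
  have hmpos : 1 ≤ m := le_trans hn hnm
  have hnm1 : 1 ≤ n * m := Nat.one_le_iff_ne_zero.mpr (by positivity)
  have hpd : ¬ p ∣ d := fun h => hpn (h.trans hdn)
  have hcop : IsCoprime ((p ^ j : ℕ) : ℤ) (d : ℤ) :=
    Int.isCoprime_iff_gcd_eq_one.mpr (by
      rw [Int.gcd_natCast_natCast]
      exact Nat.Coprime.pow_left j (hpp.coprime_iff_not_dvd.mpr hpd))
  set T := ((Finset.Icc 1 n ×ˢ Finset.Icc 1 m).filter
      (fun ab => ((p : ℤ) ^ j ∣ ((ab.1 : ℤ) * m - (ab.2 : ℤ) * n)) ∧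
        ((ab.1 : ℤ) * m ≠ (ab.2 : ℤ) * n))) with hT
  have hmem : ∀ ab ∈ T, (1 ≤ ab.1 ∧ ab.1 ≤ n) ∧ (1 ≤ ab.2 ∧ ab.2 ≤ m) ∧
      ((p : ℤ) ^ j ∣ ((ab.1 : ℤ) * m - (ab.2 : ℤ) * n)) ∧
      ((ab.1 : ℤ) * m ≠ (ab.2 : ℤ) * n) := by
    intro ab hab
    simp only [hT, Finset.mem_filter, Finset.mem_product, Finset.mem_Icc] at hab
    tauto
  have hqdvd : ∀ ab ∈ T, ((q : ℕ) : ℤ) ∣ ((ab.1 : ℤ) * m - (ab.2 : ℤ) * n) := by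
    intro ab hab
    obtain ⟨_, _, hdvd, _⟩ := hmem ab hab
    have hddvd : (d : ℤ) ∣ ((ab.1 : ℤ) * m - (ab.2 : ℤ) * n) :=
      dvd_sub (Dvd.dvd.mul_left (Int.natCast_dvd_natCast.mpr hdm) _)
        (Dvd.dvd.mul_left (Int.natCast_dvd_natCast.mpr hdn) _)
    have h2 := hcop.mul_dvd (by exact_mod_cast hdvd) hddvd
    rw [hq]; push_cast at h2 ⊢; exact h2
  set F : ℕ × ℕ → ℤ × ℕ :=
    fun ab => (((ab.1 : ℤ) * m - (ab.2 : ℤ) * n) / (q : ℤ), (ab.1 - 1) / e) with hF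
  set Y := ((Finset.Icc (-(M : ℤ)) (M : ℤ)).erase 0) ×ˢ (Finset.range d) with hY
  have hMZ : (M : ℤ) = ((n * m : ℤ) - 1) / (q : ℤ) := by
    rw [hM]
    have h1 : ((n * m - 1 : ℕ) : ℤ) = (n * m : ℤ) - 1 := by
      rw [Nat.cast_sub hnm1]; push_cast; ring
    rw [Int.natCast_ediv, h1]
  have hmaps : ∀ ab ∈ T, F ab ∈ Y := by
    intro ab hab
    obtain ⟨⟨ha1, ha2⟩, ⟨hb1, hb2⟩, hdvd, hne⟩ := hmem ab hab
    set k : ℤ := (ab.1 : ℤ) * m - (ab.2 : ℤ) * n with hk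
    have hkq : (q : ℤ) * (k / (q : ℤ)) = k := Int.mul_ediv_cancel' (hqdvd ab hab)
    have hkne : k ≠ 0 := sub_ne_zero.mpr hne
    have htne : k / (q : ℤ) ≠ 0 := fun h => hkne (by rw [← hkq, h, mul_zero])
    have hbound : |k| ≤ (n * m : ℤ) - 1 := by
      have c1 : (ab.1 : ℤ) * m ≤ (n : ℤ) * m :=
        mul_le_mul_of_nonneg_right (by exact_mod_cast ha2) (by positivity)
      have c2 : (1 : ℤ) * (n : ℤ) ≤ (ab.2 : ℤ) * n :=
        mul_le_mul_of_nonneg_right (by exact_mod_cast hb1) (by positivity)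
      have c3 : (1 : ℤ) * (m : ℤ) ≤ (ab.1 : ℤ) * m :=
        mul_le_mul_of_nonneg_right (by exact_mod_cast ha1) (by positivity)
      have c4 : (ab.2 : ℤ) * n ≤ (m : ℤ) * n :=
        mul_le_mul_of_nonneg_right (by exact_mod_cast hb2) (by positivity)
      have c5 : (1 : ℤ) ≤ n := by exact_mod_cast hn
      have c6 : (1 : ℤ) ≤ m := by exact_mod_cast hmpos
      rw [abs_le]
      constructor <;> nlinarith [mul_comm (m : ℤ) (n : ℤ)]
    have habs : |k / (q : ℤ)| ≤ (M : ℤ) := by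
      rw [hMZ]
      rw [Int.le_ediv_iff_mul_le (by exact_mod_cast hqpos)]
      calc |k / (q : ℤ)| * q = |k / (q : ℤ)| * |(q : ℤ)| := by
            rw [abs_of_nonneg (by positivity : (0:ℤ) ≤ (q:ℤ))]
        _ = |(q : ℤ) * (k / (q : ℤ))| := by rw [← abs_mul, mul_comm]
        _ = |k| := by rw [hkq]
        _ ≤ _ := hbound
    have hdiv2 : (ab.1 - 1) / e < d := by
      rw [Nat.div_lt_iff_lt_mul hepos]
      calc ab.1 - 1 < n := by omega
        _ = d * e := by rw [mul_comm]; exact hed.symm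
    simp only [hY, hF, Finset.mem_product, Finset.mem_erase, Finset.mem_Icc, Finset.mem_range]
    exact ⟨⟨htne, (abs_le.mp habs).1, (abs_le.mp habs).2⟩, hdiv2⟩
  have hinj : Set.InjOn F T := by
    intro ab hab ab' hab' heq
    obtain ⟨⟨ha1, ha2⟩, ⟨hb1, hb2⟩, _, _⟩ := hmem ab hab
    obtain ⟨⟨ha1', ha2'⟩, ⟨hb1', hb2'⟩, _, _⟩ := hmem ab' hab'
    have h1 : ((ab.1 : ℤ) * m - (ab.2 : ℤ) * n) / (q : ℤ) =
        ((ab'.1 : ℤ) * m - (ab'.2 : ℤ) * n) / (q : ℤ) := congrArg Prod.fst heq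
    have h2 : (ab.1 - 1) / e = (ab'.1 - 1) / e := congrArg Prod.snd heq
    have hkk : (ab.1 : ℤ) * m - (ab.2 : ℤ) * n = (ab'.1 : ℤ) * m - (ab'.2 : ℤ) * n := by
      rw [← Int.mul_ediv_cancel' (hqdvd ab hab), ← Int.mul_ediv_cancel' (hqdvd ab' hab'), h1]
    have hne0 : (d : ℤ) ≠ 0 := by exact_mod_cast hdpos.ne'
    have hdd : ((ab.1 : ℤ) - ab'.1) * m' * d = ((ab.2 : ℤ) - ab'.2) * e * d := by
      have hm2 : ((m' : ℤ)) * d = m := by exact_mod_cast hm'd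
      have hn2 : ((e : ℤ)) * d = n := by exact_mod_cast hed
      calc ((ab.1 : ℤ) - ab'.1) * m' * d = ((ab.1 : ℤ) - ab'.1) * ((m' : ℤ) * d) := by ring
        _ = ((ab.2 : ℤ) - ab'.2) * ((e : ℤ) * d) := by
            rw [hm2, hn2]; linear_combination hkk
        _ = ((ab.2 : ℤ) - ab'.2) * e * d := by ring
    have hdd2 : ((ab.1 : ℤ) - ab'.1) * m' = ((ab.2 : ℤ) - ab'.2) * e :=
      mul_right_cancel₀ hne0 hdd
    have hcop2 : IsCoprime ((e : ℕ) : ℤ) ((m' : ℕ) : ℤ) :=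
      Int.isCoprime_iff_gcd_eq_one.mpr (by
        rw [Int.gcd_natCast_natCast]
        exact Nat.coprime_div_gcd_div_gcd hdpos)
    have hdvd3 : ((e : ℕ) : ℤ) ∣ ((ab.1 : ℤ) - ab'.1) * m' :=
      ⟨(ab.2 : ℤ) - ab'.2, by linear_combination hdd2⟩
    have hdvd4 : ((e : ℕ) : ℤ) ∣ ((ab.1 : ℤ) - ab'.1) := hcop2.dvd_of_dvd_mul_right hdvd3
    have haa : ab.1 = ab'.1 := nat_eq_of_cong_div hepos hdvd4 h2 ha1 ha1'
    have hbb : ab.2 = ab'.2 := by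
      have : ((ab.2 : ℤ)) * n = (ab'.2 : ℤ) * n := by
        rw [haa] at hkk; linarith
      have hnne : ((n : ℕ) : ℤ) ≠ 0 := Int.natCast_ne_zero.mpr (by omega)
      exact_mod_cast mul_right_cancel₀ hnne this
    exact Prod.ext haa hbb
  have hcard : T.card ≤ Y.card := Finset.card_le_card_of_injOn F hmaps hinj
  have hYcard : Y.card = 2 * M * d := by
    rw [hY, Finset.card_product, Finset.card_erase_of_mem (by
      simp only [Finset.mem_Icc]
      exact ⟨neg_nonpos.mpr (Int.natCast_nonneg M), Int.natCast_nonneg M⟩), Int.card_Icc,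
      Finset.card_range]
    have : ((M : ℤ) + 1 - -(M : ℤ)).toNat = 2 * M + 1 := by omega
    rw [this]
    simp
  calc T.card * p ^ j ≤ (2 * M * d) * p ^ j := by
        exact Nat.mul_le_mul_right _ (hYcard ▸ hcard)
    _ = 2 * (M * q) := by rw [hq]; ring
    _ ≤ 2 * (n * m - 1) := Nat.mul_le_mul_left _ (Nat.div_mul_le_self _ _)
    _ ≤ 2 * (n * m) := by omega



set_option maxHeartbeats 1000000 in
theorem statement19 (p : ℕ) [Fact p.Prime]
    (B : Set UnitAddCircle) (hB : ∃ x r, 0 < r ∧ B = Metric.ball x r)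
    (ψ : ℝ → ℝ) (hψpos : ∀ x > (0 : ℝ), 0 < ψ x)
    (hψanti : AntitoneOn ψ (Set.Ioi 0)) (N : ℕ) :
    ∫ α, (Delta p ψ B N α : ℝ) ^ 2 ∂(muP p) ≤
      (∑ n ∈ Finset.Icc 1 N, (n : ℝ) * ψ n) +
        4 * (∑ n ∈ Finset.Icc 1 N, (n : ℝ) * ψ n) ^ 2 := by
  classical
  set μ := muP p with hμ
  set Ψ := ∑ n ∈ Finset.Icc 1 N, (n : ℝ) * ψ n with hΨ
  have hψIcc : ∀ n ∈ Finset.Icc 1 N, 0 < ψ (n : ℝ) := by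
    intro n hn
    rw [Finset.mem_Icc] at hn
    exact hψpos _ (by exact_mod_cast hn.1)
  set S : Finset (ℕ × ℕ) := (Finset.Icc 1 N ×ˢ Finset.Icc 1 N).filter
    (fun q => 1 ≤ q.2 ∧ q.2 ≤ N ∧ ¬ p ∣ q.2 ∧ 1 ≤ q.1 ∧ q.1 ≤ q.2 ∧ Nat.Coprime q.1 q.2 ∧
      (((q.1 : ℝ) / (q.2 : ℝ)) : UnitAddCircle) ∈ B) with hS
  set E : ℕ × ℕ → Set ℤ_[p] :=
    (fun q => {α : ℤ_[p] | ‖(q.2 : ℤ_[p]) * α - (q.1 : ℤ_[p])‖ < ψ (q.2 : ℝ)}) with hE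
  have hEmeas : ∀ q, MeasurableSet (E q) := by
    intro q
    exact (isOpen_lt (by continuity) continuous_const).measurableSet
  have hSmem : ∀ q ∈ S, 1 ≤ q.2 ∧ q.2 ≤ N ∧ ¬ p ∣ q.2 ∧ 1 ≤ q.1 ∧ q.1 ≤ q.2 ∧
      Nat.Coprime q.1 q.2 := by
    intro q hq
    simp only [hS, Finset.mem_filter] at hq
    tauto
  -- Delta as a sum of indicators
  have hDelta : ∀ α, (Delta p ψ B N α : ℝ) =
      ∑ q ∈ S, (E q).indicator (fun _ => (1 : ℝ)) α := by
    intro α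
    have hset : {q : ℕ × ℕ | 1 ≤ q.2 ∧ q.2 ≤ N ∧ ¬ p ∣ q.2 ∧ 1 ≤ q.1 ∧ q.1 ≤ q.2 ∧
        Nat.Coprime q.1 q.2 ∧ (((q.1 : ℝ) / (q.2 : ℝ)) : UnitAddCircle) ∈ B ∧
        ‖(q.2 : ℤ_[p]) * α - (q.1 : ℤ_[p])‖ < ψ (q.2 : ℝ)} =
        ↑(S.filter (fun q => α ∈ E q)) := by
      ext q
      simp only [hS, Finset.coe_filter, Finset.mem_filter, Finset.mem_product, Finset.mem_Icc,
        Set.mem_setOf_eq, hE]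
      constructor
      · rintro ⟨h1, h2, h3, h4, h5, h6, h7, h8⟩
        exact ⟨⟨⟨⟨h4, le_trans h5 h2⟩, h1, h2⟩, h1, h2, h3, h4, h5, h6, h7⟩, h8⟩
      · rintro ⟨⟨-, h1, h2, h3, h4, h5, h6, h7⟩, h8⟩
        exact ⟨h1, h2, h3, h4, h5, h6, h7, h8⟩
    rw [Delta, hset, Set.ncard_coe_finset, Finset.card_filter]
    push_cast
    refine Finset.sum_congr rfl fun q _ => ?_
    simp [Set.indicator_apply]
  -- the integral as a finite sum of measures
  have hint : ∫ α, (Delta p ψ B N α : ℝ) ^ 2 ∂μ =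
      ∑ z ∈ S ×ˢ S, ((μ (E z.1 ∩ E z.2)).toReal) := by
    have hsq : ∀ α, (Delta p ψ B N α : ℝ) ^ 2 =
        ∑ z ∈ S ×ˢ S, ((E z.1 ∩ E z.2).indicator (fun _ => (1 : ℝ)) α) := by
      intro α
      rw [hDelta, sq, Finset.sum_mul_sum, ← Finset.sum_product']
      refine Finset.sum_congr rfl fun z _ => ?_
      by_cases h1 : α ∈ E z.1 <;> by_cases h2 : α ∈ E z.2 <;>
        simp [Set.indicator_apply, h1, h2]
    calc ∫ α, (Delta p ψ B N α : ℝ) ^ 2 ∂μ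
        = ∫ α, ∑ z ∈ S ×ˢ S, ((E z.1 ∩ E z.2).indicator (fun _ => (1 : ℝ)) α) ∂μ :=
          integral_congr_ae (Filter.Eventually.of_forall fun α => hsq α)
      _ = ∑ z ∈ S ×ˢ S, ∫ α, ((E z.1 ∩ E z.2).indicator (fun _ => (1 : ℝ)) α) ∂μ := by
          refine integral_finset_sum _ fun z _ => ?_
          refine (integrable_indicator_iff ((hEmeas z.1).inter (hEmeas z.2))).mpr ?_
          exact integrableOn_const (measure_ne_top μ _)
      _ = ∑ z ∈ S ×ˢ S, ((μ (E z.1 ∩ E z.2)).toReal) := by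
          refine Finset.sum_congr rfl fun z _ => ?_
          rw [integral_indicator_const _ ((hEmeas z.1).inter (hEmeas z.2))]
          simp [measureReal_def]
  -- basic measure bounds
  have hμE : ∀ q ∈ S, (μ (E q)).toReal ≤ ψ (q.2 : ℝ) := by
    intro q hq
    obtain ⟨h1, h2, h3, -, -, -⟩ := hSmem q hq
    have hψq : 0 < ψ (q.2 : ℝ) := hψIcc q.2 (Finset.mem_Icc.mpr ⟨h1, h2⟩)
    have hle := meas_E_le (p := p) q.1 q.2 h3 (r := ψ (q.2 : ℝ))
    have hlt : (p : ℝ) ^ (-(jjE p (ψ (q.2 : ℝ)) : ℤ)) < ψ (q.2 : ℝ) := jjE_lt hψq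
    calc (μ (E q)).toReal ≤ (ENNReal.ofReal ((p : ℝ) ^ (-(jjE p (ψ (q.2 : ℝ)) : ℤ)))).toReal :=
          ENNReal.toReal_mono ENNReal.ofReal_ne_top hle
      _ ≤ ψ (q.2 : ℝ) := by
          rw [ENNReal.toReal_ofReal (by positivity)]
          exact hlt.le
  have htnonneg : ∀ z : (ℕ × ℕ) × (ℕ × ℕ), 0 ≤ (μ (E z.1 ∩ E z.2)).toReal :=
    fun z => ENNReal.toReal_nonneg
  have htle : ∀ (z : (ℕ × ℕ) × (ℕ × ℕ)), z.2 ∈ S → (μ (E z.1 ∩ E z.2)).toReal ≤ ψ (z.2.2 : ℝ) :=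
    fun z hz => le_trans (ENNReal.toReal_mono (measure_ne_top μ _)
      (measure_mono Set.inter_subset_right)) (hμE z.2 hz)

  obtain ⟨t, ht⟩ : ∃ t : (ℕ × ℕ) × (ℕ × ℕ) → ℝ,
      t = fun z => (μ (E z.1 ∩ E z.2)).toReal := ⟨_, rfl⟩
  have htnonneg' : ∀ z : (ℕ × ℕ) × (ℕ × ℕ), 0 ≤ t z := by
    intro z; rw [ht]; exact ENNReal.toReal_nonneg
  have htle' : ∀ (z : (ℕ × ℕ) × (ℕ × ℕ)), z.2 ∈ S → t z ≤ ψ ((z.2.2 : ℕ) : ℝ) := by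
    intro z hz; rw [ht]; exact htle z hz
  have hintt : ∫ α, (Delta p ψ B N α : ℝ) ^ 2 ∂μ = ∑ z ∈ S ×ˢ S, t z := by
    rw [hint, ht]
  -- diagonal bound
  have hdiag : ∑ z ∈ (S ×ˢ S).filter (fun z => z.1 = z.2), t z ≤ Ψ := by
    have himg : (S ×ˢ S).filter (fun z => z.1 = z.2) = S.image (fun q => (q, q)) := by
      ext z
      simp only [Finset.mem_filter, Finset.mem_product, Finset.mem_image]
      constructor
      · rintro ⟨⟨h1, h2⟩, h3⟩
        exact ⟨z.1, h1, Prod.ext rfl h3⟩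
      · rintro ⟨q, hq, rfl⟩
        exact ⟨⟨hq, hq⟩, rfl⟩
    have hinjd : ∀ a ∈ S, ∀ b ∈ S, (fun q => (q, q)) a = (fun q => (q, q)) b → a = b :=
      fun a _ b _ h => (Prod.ext_iff.mp h).1
    rw [himg, Finset.sum_image hinjd]
    have hstep1 : ∑ q ∈ S, t (q, q) ≤ ∑ q ∈ S, ψ (q.2 : ℝ) :=
      Finset.sum_le_sum fun q hq => htle' (q, q) hq
    refine le_trans hstep1 ?_
    set U := (Finset.Icc 1 N).biUnion (fun n => (Finset.Icc 1 n).image (fun a => (a, n)))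
      with hU
    have hUmem : ∀ q ∈ U, 1 ≤ q.1 ∧ q.1 ≤ q.2 ∧ 1 ≤ q.2 ∧ q.2 ≤ N := by
      intro q hq
      simp only [hU, Finset.mem_biUnion, Finset.mem_image, Finset.mem_Icc] at hq
      obtain ⟨n, hn, a, ha, rfl⟩ := hq
      exact ⟨ha.1, ha.2, hn.1, hn.2⟩
    have hSU : S ⊆ U := by
      intro q hq
      obtain ⟨h1, h2, -, h4, h5, -⟩ := hSmem q hq
      simp only [hU, Finset.mem_biUnion, Finset.mem_image, Finset.mem_Icc]
      exact ⟨q.2, ⟨h1, h2⟩, q.1, ⟨h4, h5⟩, rfl⟩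
    have hstep2 : ∑ q ∈ S, ψ (q.2 : ℝ) ≤ ∑ q ∈ U, ψ (q.2 : ℝ) := by
      refine Finset.sum_le_sum_of_subset_of_nonneg hSU fun q hq _ => ?_
      obtain ⟨-, -, h3, h4⟩ := hUmem q hq
      exact (hψIcc q.2 (Finset.mem_Icc.mpr ⟨h3, h4⟩)).le
    refine le_trans hstep2 ?_
    have hdisjU : ∀ n₁ ∈ (Finset.Icc 1 N : Finset ℕ), ∀ n₂ ∈ (Finset.Icc 1 N : Finset ℕ),
        n₁ ≠ n₂ → Disjoint ((Finset.Icc 1 n₁).image (fun a => (a, n₁)))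
          ((Finset.Icc 1 n₂).image (fun a => (a, n₂))) := by
      intro n₁ _ n₂ _ hne
      rw [Finset.disjoint_left]
      intro q hq1 hq2
      simp only [Finset.mem_image] at hq1 hq2
      obtain ⟨a, -, rfl⟩ := hq1
      obtain ⟨a', -, h⟩ := hq2
      exact hne ((Prod.ext_iff.mp h).2).symm
    rw [hU, Finset.sum_biUnion hdisjU, hΨ]
    refine le_of_eq (Finset.sum_congr rfl fun n hn => ?_)
    have hinj2 : ∀ a ∈ Finset.Icc 1 n, ∀ b ∈ Finset.Icc 1 n,
        (fun a => (a, n)) a = (fun a => (a, n)) b → a = b :=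
      fun a _ b _ h => (Prod.ext_iff.mp h).1
    rw [Finset.sum_image hinj2]
    simp [Finset.sum_const, Nat.card_Icc, mul_comm]
  -- off-diagonal
  set OD := (S ×ˢ S).filter (fun z => ¬ z.1 = z.2) with hOD
  set OD1 := OD.filter (fun z => z.1.2 ≤ z.2.2) with hOD1
  have hswap : ∑ z ∈ OD, t z ≤ 2 * ∑ z ∈ OD1, t z := by
    rw [← Finset.sum_filter_add_sum_filter_not OD (fun z => z.1.2 ≤ z.2.2)]
    have htswap : ∀ z : (ℕ × ℕ) × (ℕ × ℕ), t (Prod.swap z) = t z := by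
      intro z
      simp only [ht, Prod.swap]
      rw [Set.inter_comm]
    have h2 : ∑ z ∈ OD.filter (fun z => ¬ z.1.2 ≤ z.2.2), t z ≤ ∑ z ∈ OD1, t z := by
      have heq : ∑ z ∈ OD.filter (fun z => ¬ z.1.2 ≤ z.2.2), t z =
          ∑ z ∈ (OD.filter (fun z => ¬ z.1.2 ≤ z.2.2)).image Prod.swap, t z := by
        rw [Finset.sum_image (fun a _ b _ h => Prod.swap_injective h)]
        exact Finset.sum_congr rfl fun z _ => (htswap z).symm
      rw [heq]
      refine Finset.sum_le_sum_of_subset_of_nonneg ?_ (fun z _ _ => htnonneg' z)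
      intro z hz
      simp only [Finset.mem_image] at hz
      obtain ⟨z', hz', rfl⟩ := hz
      simp only [hOD1, hOD, Finset.mem_filter, Finset.mem_product, Prod.fst_swap,
        Prod.snd_swap] at hz' ⊢
      obtain ⟨⟨⟨hz1, hz2⟩, hne⟩, hnm⟩ := hz'
      exact ⟨⟨⟨hz2, hz1⟩, fun h => hne h.symm⟩, by omega⟩
    linarith
  set W := (Finset.Icc 1 N ×ˢ Finset.Icc 1 N).filter (fun w => w.1 ≤ w.2 ∧ ¬ p ∣ w.1) with hW
  set Tset : ℕ × ℕ → Finset (ℕ × ℕ) := fun w =>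
    (Finset.Icc 1 w.1 ×ˢ Finset.Icc 1 w.2).filter
      (fun ab => ((p : ℤ) ^ (jjE p (ψ (w.1 : ℝ))) ∣ ((ab.1 : ℤ) * w.2 - (ab.2 : ℤ) * w.1)) ∧
        ((ab.1 : ℤ) * w.2 ≠ (ab.2 : ℤ) * w.1)) with hTset
  set cond : (ℕ × ℕ) × (ℕ × ℕ) → Prop := fun z =>
    ((p : ℤ) ^ (jjE p (ψ (z.1.2 : ℝ))) ∣ ((z.1.1 : ℤ) * z.2.2 - (z.2.1 : ℤ) * z.1.2)) ∧
    ((z.1.1 : ℤ) * z.2.2 ≠ (z.2.1 : ℤ) * z.1.2) with hcond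
  have hstepA : ∀ z ∈ OD1, t z ≤ (if cond z then ψ (z.2.2 : ℝ) else 0) := by
    intro z hz
    simp only [hOD1, hOD, Finset.mem_filter, Finset.mem_product] at hz
    obtain ⟨⟨⟨hz1, hz2⟩, hzne⟩, hznm⟩ := hz
    obtain ⟨hn1, hnN, hpn, ha1, han, hcop1⟩ := hSmem _ hz1
    obtain ⟨hm1, hmN, hpm, hb1, hbm, hcop2⟩ := hSmem _ hz2
    have hψn : 0 < ψ ((z.1.2 : ℕ) : ℝ) := hψIcc _ (Finset.mem_Icc.mpr ⟨hn1, hnN⟩)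
    have hψm : 0 < ψ ((z.2.2 : ℕ) : ℝ) := hψIcc _ (Finset.mem_Icc.mpr ⟨hm1, hmN⟩)
    have hne2 : (z.1.1 : ℤ) * z.2.2 ≠ (z.2.1 : ℤ) * z.1.2 := by
      intro hcontra
      have hnat : z.1.1 * z.2.2 = z.2.1 * z.1.2 := by exact_mod_cast hcontra
      have hd1 : z.1.2 ∣ z.2.2 := by
        refine Nat.Coprime.dvd_of_dvd_mul_left hcop1.symm ?_
        exact ⟨z.2.1, by rw [hnat, Nat.mul_comm]⟩
      have hd2 : z.2.2 ∣ z.1.2 := by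
        refine Nat.Coprime.dvd_of_dvd_mul_left hcop2.symm ?_
        exact ⟨z.1.1, by rw [← hnat, Nat.mul_comm]⟩
      have hnmeq : z.1.2 = z.2.2 := Nat.dvd_antisymm hd1 hd2
      have hab : z.1.1 = z.2.1 := by
        rw [hnmeq] at hnat
        have := Nat.eq_of_mul_eq_mul_right (by omega : 0 < z.2.2) hnat
        omega
      exact hzne (Prod.ext hab hnmeq)
    by_cases hdvd : ((p : ℤ) ^ (jjE p (ψ ((z.1.2 : ℕ) : ℝ))) ∣
        ((z.1.1 : ℤ) * z.2.2 - (z.2.1 : ℤ) * z.1.2))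
    · rw [if_pos ⟨hdvd, hne2⟩]
      exact htle' z hz2
    · rw [if_neg (fun hc => hdvd hc.1)]
      have hempty : E z.1 ∩ E z.2 = ∅ := by
        rw [Set.eq_empty_iff_forall_notMem]
        rintro α ⟨hα1, hα2⟩
        simp only [hE, Set.mem_setOf_eq] at hα1 hα2
        have hanti : ψ ((z.2.2 : ℕ) : ℝ) ≤ ψ ((z.1.2 : ℕ) : ℝ) := by
          refine hψanti ?_ ?_ ?_
          · exact Set.mem_Ioi.mpr (by exact_mod_cast hn1)
          · exact Set.mem_Ioi.mpr (by exact_mod_cast (le_trans hm1 (le_refl _)))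
          · exact_mod_cast hznm
        exact hdvd (dvd_of_inter hα1 hα2 hanti)
      rw [ht]
      simp only [hempty]
      simp
  have hstepBF : ∑ z ∈ OD1, t z ≤ 2 * Ψ ^ 2 := by
    have hdisjW : ∀ w₁ ∈ W, ∀ w₂ ∈ W, w₁ ≠ w₂ →
        Disjoint ((Tset w₁).image (fun ab => ((ab.1, w₁.1), (ab.2, w₁.2))))
          ((Tset w₂).image (fun ab => ((ab.1, w₂.1), (ab.2, w₂.2)))) := by
      intro w₁ _ w₂ _ hne
      rw [Finset.disjoint_left]
      intro z hz1 hz2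
      simp only [Finset.mem_image] at hz1 hz2
      obtain ⟨ab, -, rfl⟩ := hz1
      obtain ⟨ab', -, h⟩ := hz2
      simp only [Prod.mk.injEq] at h
      exact hne (Prod.ext h.1.2.symm h.2.2.symm)
    calc ∑ z ∈ OD1, t z ≤ ∑ z ∈ OD1, (if cond z then ψ ((z.2.2 : ℕ) : ℝ) else 0) :=
          Finset.sum_le_sum hstepA
      _ = ∑ z ∈ OD1.filter cond, ψ ((z.2.2 : ℕ) : ℝ) := (Finset.sum_filter _ _).symm
      _ ≤ ∑ z ∈ W.biUnion (fun w => (Tset w).image (fun ab => ((ab.1, w.1), (ab.2, w.2)))),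
            ψ ((z.2.2 : ℕ) : ℝ) := by
          refine Finset.sum_le_sum_of_subset_of_nonneg ?_ ?_
          · intro z hz
            simp only [Finset.mem_filter] at hz
            obtain ⟨hz1, hzc⟩ := hz
            simp only [hOD1, hOD, Finset.mem_filter, Finset.mem_product] at hz1
            obtain ⟨⟨⟨hq1, hq2⟩, hne⟩, hnm⟩ := hz1
            obtain ⟨hn1, hnN, hpn, ha1, han, -⟩ := hSmem _ hq1
            obtain ⟨hm1, hmN, -, hb1, hbm, -⟩ := hSmem _ hq2
            rw [Finset.mem_biUnion]
            refine ⟨(z.1.2, z.2.2), ?_, ?_⟩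
            · simp only [hW, Finset.mem_filter, Finset.mem_product, Finset.mem_Icc]
              exact ⟨⟨⟨hn1, hnN⟩, hm1, hmN⟩, hnm, hpn⟩
            · rw [Finset.mem_image]
              refine ⟨(z.1.1, z.2.1), ?_, ?_⟩
              · simp only [hTset, Finset.mem_filter, Finset.mem_product, Finset.mem_Icc]
                exact ⟨⟨⟨ha1, han⟩, hb1, hbm⟩, hzc.1, hzc.2⟩
              · simp
          · intro z hz _
            rw [Finset.mem_biUnion] at hz
            obtain ⟨w, hw, hzw⟩ := hz
            simp only [hW, Finset.mem_filter, Finset.mem_product, Finset.mem_Icc] at hw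
            simp only [Finset.mem_image] at hzw
            obtain ⟨ab, -, rfl⟩ := hzw
            exact (hψIcc w.2 (Finset.mem_Icc.mpr ⟨hw.1.2.1, hw.1.2.2⟩)).le
      _ = ∑ w ∈ W, ∑ z ∈ (Tset w).image (fun ab => ((ab.1, w.1), (ab.2, w.2))),
            ψ ((z.2.2 : ℕ) : ℝ) := Finset.sum_biUnion hdisjW
      _ = ∑ w ∈ W, ((Tset w).card : ℝ) * ψ ((w.2 : ℕ) : ℝ) := by
          refine Finset.sum_congr rfl fun w hw => ?_
          have hinjw : ∀ a ∈ Tset w, ∀ b ∈ Tset w,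
              (fun ab => ((ab.1, w.1), (ab.2, w.2))) a = (fun ab => ((ab.1, w.1), (ab.2, w.2))) b
                → a = b := by
            intro a _ b _ h
            simp only [Prod.mk.injEq] at h
            exact Prod.ext h.1.1 h.2.1
          rw [Finset.sum_image hinjw]
          simp [Finset.sum_const, nsmul_eq_mul]
      _ ≤ ∑ w ∈ W, 2 * (w.1 : ℝ) * (w.2 : ℝ) * ψ ((w.1 : ℕ) : ℝ) * ψ ((w.2 : ℕ) : ℝ) := by
          refine Finset.sum_le_sum fun w hw => ?_
          simp only [hW, Finset.mem_filter, Finset.mem_product, Finset.mem_Icc] at hw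
          obtain ⟨⟨⟨hn1, hnN⟩, hm1, hmN⟩, hnm, hpn⟩ := hw
          have hψn : 0 < ψ ((w.1 : ℕ) : ℝ) := hψIcc _ (Finset.mem_Icc.mpr ⟨hn1, hnN⟩)
          have hψm : 0 < ψ ((w.2 : ℕ) : ℝ) := hψIcc _ (Finset.mem_Icc.mpr ⟨hm1, hmN⟩)
          have hcount := count_key (Fact.out : p.Prime) (jjE p (ψ ((w.1 : ℕ) : ℝ))) w.1 w.2 hn1 hnm hpn
          have hppos : (0 : ℝ) < (p : ℝ) := by exact_mod_cast (Fact.out : p.Prime).pos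
          set j := jjE p (ψ ((w.1 : ℕ) : ℝ)) with hj
          have hpj : (0 : ℝ) < (p : ℝ) ^ j := pow_pos hppos j
          have h0 : (((Tset w).card * p ^ j : ℕ) : ℝ) ≤ ((2 * (w.1 * w.2) : ℕ) : ℝ) :=
            Nat.cast_le.mpr hcount
          have h1 : ((Tset w).card : ℝ) * (p : ℝ) ^ j ≤ 2 * ((w.1 : ℝ) * (w.2 : ℝ)) := by
            push_cast at h0
            exact h0
          have h2 : ((p : ℝ) ^ j)⁻¹ ≤ ψ ((w.1 : ℕ) : ℝ) := by
            have hlt := jjE_lt (p := p) hψn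
            rw [zpow_neg, zpow_natCast] at hlt
            exact hlt.le
          have h3 : ((Tset w).card : ℝ) ≤ 2 * ((w.1 : ℝ) * (w.2 : ℝ)) * ((p : ℝ) ^ j)⁻¹ := by
            rw [← le_div_iff₀ hpj] at h1
            rwa [div_eq_mul_inv] at h1
          calc ((Tset w).card : ℝ) * ψ ((w.2 : ℕ) : ℝ)
              ≤ (2 * ((w.1 : ℝ) * (w.2 : ℝ)) * ((p : ℝ) ^ j)⁻¹) * ψ ((w.2 : ℕ) : ℝ) :=
                mul_le_mul_of_nonneg_right h3 hψm.le
            _ ≤ (2 * ((w.1 : ℝ) * (w.2 : ℝ)) * ψ ((w.1 : ℕ) : ℝ)) * ψ ((w.2 : ℕ) : ℝ) := by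
                refine mul_le_mul_of_nonneg_right
                  (mul_le_mul_of_nonneg_left h2 (by positivity)) hψm.le
            _ = 2 * (w.1 : ℝ) * (w.2 : ℝ) * ψ ((w.1 : ℕ) : ℝ) * ψ ((w.2 : ℕ) : ℝ) := by ring
      _ ≤ ∑ w ∈ Finset.Icc 1 N ×ˢ Finset.Icc 1 N,
            2 * (w.1 : ℝ) * (w.2 : ℝ) * ψ ((w.1 : ℕ) : ℝ) * ψ ((w.2 : ℕ) : ℝ) := by
          refine Finset.sum_le_sum_of_subset_of_nonneg (Finset.filter_subset _ _) ?_
          intro w hw _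
          simp only [Finset.mem_product, Finset.mem_Icc] at hw
          have h1 := hψIcc w.1 (Finset.mem_Icc.mpr hw.1)
          have h2 := hψIcc w.2 (Finset.mem_Icc.mpr hw.2)
          positivity
      _ = 2 * Ψ ^ 2 := by
          rw [Finset.sum_product, hΨ, sq, Finset.sum_mul_sum, Finset.mul_sum]
          refine Finset.sum_congr rfl fun n _ => ?_
          rw [Finset.mul_sum]
          refine Finset.sum_congr rfl fun m _ => ?_
          ring
  -- put everything together
  rw [hintt, ← Finset.sum_filter_add_sum_filter_not (S ×ˢ S) (fun z => z.1 = z.2)]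
  have hoffOD : ∑ z ∈ (S ×ˢ S).filter (fun z => ¬ z.1 = z.2), t z ≤ 4 * Ψ ^ 2 := by
    calc ∑ z ∈ (S ×ˢ S).filter (fun z => ¬ z.1 = z.2), t z = ∑ z ∈ OD, t z := by rw [hOD]
      _ ≤ 2 * ∑ z ∈ OD1, t z := hswap
      _ ≤ 2 * (2 * Ψ ^ 2) := by linarith [hstepBF]
      _ = 4 * Ψ ^ 2 := by ring
  have := hdiag
  linarith [hdiag, hoffOD]
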